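/- There exists a 2×2 single-follower game with follower payoff matrix (columns A, B; rows are the leader's worst-case scenarios) equal to (1,0;0,δ) for δ > 0, and a finite leader commitment set P_L = {0, 1/(1+δ)} ⊆ [0,1] (probabilities of the second row) such that the follower's maximin response to P_L is the pure strategy A; but for the shifted set P_L + ε = {ε, 1/(1+δ) + ε} with any sufficiently small ε > 0, the follower's unique maximin response is the mixture (1/(1+δ))·A + (δ/(1+δ))·B. Hence the maximin best response map is not continuous (in total variation) with respect to perturbations of the commitment set, with discontinuity magnitude δ/(1+δ) independent of ε. -/
import Mathlib


/-- Discontinuity of the maximin best-response map.  There is a 2×2 single-follower game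
with follower column payoffs `U_A(p) = 1−p`, `U_B(p) = δp` (`δ > 0`, `p` = probability of
the leader's second row) and commitment set `P = {0, 1/(1+δ)}` such that pure `A` is a
maximin response to `P`, while for every sufficiently small `ε > 0` the shifted set
`P + ε = {ε, 1/(1+δ)+ε}` has the mixture `(1/(1+δ))·A + (δ/(1+δ))·B` as its unique
maximin response — a jump of total-variation magnitude `δ/(1+δ)` independent of `ε`. -/
theorem stmt17 :
    ∃ δ : ℝ, 0 < δ ∧ ∃ ε₀ : ℝ, 0 < ε₀ ∧
    let val : (Fin 2 → ℝ) → ℝ → ℝ := fun q p => q 0 * (1 - p) + q 1 * (δ * p)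
    let w : (Fin 2 → ℝ) → Set ℝ → ℝ := fun q P => sInf ((val q) '' P)
    let pureA : Fin 2 → ℝ := fun t => if t = 0 then 1 else 0
    let mixAB : Fin 2 → ℝ := fun t => if t = 0 then 1 / (1 + δ) else δ / (1 + δ)
    (∀ q ∈ stdSimplex ℝ (Fin 2),
      w q {0, 1 / (1 + δ)} ≤ w pureA {0, 1 / (1 + δ)}) ∧
    (∀ ε : ℝ, 0 < ε → ε < ε₀ →
      (∀ q ∈ stdSimplex ℝ (Fin 2),
        w q {ε, 1 / (1 + δ) + ε} ≤ w mixAB {ε, 1 / (1 + δ) + ε} ∧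
        (q ≠ mixAB → w q {ε, 1 / (1 + δ) + ε} < w mixAB {ε, 1 / (1 + δ) + ε}))) ∧
    (∀ t : Fin 2, |pureA t - mixAB t| ≤ δ / (1 + δ)) ∧
    (∃ t : Fin 2, |pureA t - mixAB t| = δ / (1 + δ)) := by
  refine ⟨1, one_pos, 1/2, by norm_num, ?_⟩
  intro val w pureA mixAB
  have hw : ∀ q : Fin 2 → ℝ, ∀ x y : ℝ, w q {x, y} = min (val q x) (val q y) := by
    intro q x y
    show sInf ((val q) '' {x, y}) = _
    rw [Set.image_pair, csInf_pair]
  have hval : ∀ q : Fin 2 → ℝ, ∀ p : ℝ, val q p = q 0 * (1 - p) + q 1 * (1 * p) := fun _ _ => rfl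
  have hmix0 : mixAB 0 = 1/2 := by norm_num [mixAB]
  have hmix1 : mixAB 1 = 1/2 := by norm_num [mixAB]
  refine ⟨?_, ?_, ?_, ?_⟩
  · intro q hq
    rw [hw, hw]
    have h2 : val q (1 / (1 + 1)) = 1/2 := by
      have := hq.2
      rw [Fin.sum_univ_two] at this
      rw [hval]; linarith
    have hA : val pureA (1 / (1 + 1)) = 1/2 := by
      show (1:ℝ) * _ + (0:ℝ) * _ = 1/2; norm_num
    have hA0 : val pureA 0 = 1 := by
      show (1:ℝ) * _ + (0:ℝ) * _ = 1; norm_num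
    rw [h2, hA, hA0]
    exact le_trans (min_le_right _ _) (le_min (by norm_num) le_rfl)
  · intro ε hε hε2 q hq
    have hsum : q 0 + q 1 = 1 := by have := hq.2; rwa [Fin.sum_univ_two] at this
    have h0 : 0 ≤ q 0 := hq.1 0
    rw [hw, hw]
    have hm1 : val mixAB ε = 1/2 := by rw [hval, hmix0, hmix1]; ring
    have hm2 : val mixAB (1 / (1 + 1) + ε) = 1/2 := by rw [hval, hmix0, hmix1]; ring
    rw [hm1, hm2, min_self]
    have hf1 : val q ε = q 0 + ε * (1 - 2 * q 0) := by rw [hval]; nlinarith [hsum]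
    have hf2 : val q (1 / (1 + 1) + ε) = 1/2 + ε * (1 - 2 * q 0) := by
      rw [hval]; nlinarith [hsum]
    constructor
    · rcases le_or_gt (q 0) (1/2) with h | h
      · exact le_trans (min_le_left _ _) (by rw [hf1]; nlinarith)
      · exact le_trans (min_le_right _ _) (by rw [hf2]; nlinarith)
    · intro hne
      have ha : q 0 ≠ 1/2 := by
        intro h
        apply hne
        funext t
        fin_cases t
        · show q 0 = mixAB 0; rw [h, hmix0]
        · show q 1 = mixAB 1; rw [hmix1]; linarith
      rcases lt_or_gt_of_ne ha with h | h
      · exact lt_of_le_of_lt (min_le_left _ _) (by rw [hf1]; nlinarith)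
      · exact lt_of_le_of_lt (min_le_right _ _) (by rw [hf2]; nlinarith)
  · intro t
    fin_cases t <;> norm_num [pureA, mixAB, abs_le]
  · refine ⟨0, ?_⟩
    show |pureA 0 - mixAB 0| = 1/(1+1)
    rw [show pureA 0 - mixAB 0 = 1/2 by norm_num [pureA, mixAB], abs_of_nonneg (by norm_num)]
    norm_num
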